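/- Let e : [0,∞) → (0,1] satisfy the implicit relation e(r) + a₀ r^{1/5} e(r)^{3/5} = 1 (r > 0) and let η(r) = r e(r). Then for all r > 0, |η'(r) − e(r)| = e(r)(1−e(r)) / (3 + 2e(r)) ≤ 1 − e(r). -/

import Mathlib

open Real

/-- For the viscoelastic restitution coefficient,
`|η'(r) − e(r)| = e(r)(1−e(r))/(3+2e(r)) ≤ 1 − e(r)`. -/
theorem viscoelastic_eta_deriv_close (a₀ : ℝ) (ha : 0 < a₀) (e e' : ℝ → ℝ)
    (hrange : ∀ r ≥ (0 : ℝ), 0 < e r ∧ e r ≤ 1)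
    (himp : ∀ r > (0 : ℝ), e r + a₀ * r ^ ((1 : ℝ) / 5) * (e r) ^ ((3 : ℝ) / 5) = 1)
    (hderiv : ∀ r > (0 : ℝ), HasDerivAt e (e' r) r) :
    ∀ r > (0 : ℝ), ∀ d : ℝ, HasDerivAt (fun s => s * e s) d r →
      |d - e r| = e r * (1 - e r) / (3 + 2 * e r) ∧ |d - e r| ≤ 1 - e r := by
  intro r hr d hd
  obtain ⟨hE0, hE1⟩ := hrange r hr.le
  have hde := hderiv r hr
  -- derivative of the implicit relation
  have h1 : HasDerivAt (fun s : ℝ => s ^ ((1:ℝ)/5))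
      ((1/5) * r ^ ((1:ℝ)/5 - 1)) r :=
    Real.hasDerivAt_rpow_const (Or.inl hr.ne')
  have h2 : HasDerivAt (fun s => (e s) ^ ((3:ℝ)/5))
      (e' r * (3/5) * (e r) ^ ((3:ℝ)/5 - 1)) r :=
    hde.rpow_const (Or.inl hE0.ne')
  have hF : HasDerivAt (fun s => e s + a₀ * s ^ ((1:ℝ)/5) * (e s) ^ ((3:ℝ)/5))
      (e' r + (a₀ * ((1/5) * r ^ ((1:ℝ)/5 - 1)) * (e r) ^ ((3:ℝ)/5)
        + a₀ * r ^ ((1:ℝ)/5) * (e' r * (3/5) * (e r) ^ ((3:ℝ)/5 - 1)))) r := by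
    have := hde.add (((h1.const_mul a₀).mul h2))
    exact this
  have hmem : Set.Ioi (0:ℝ) ∈ nhds r := isOpen_Ioi.mem_nhds hr
  have hconst : (fun s => e s + a₀ * s ^ ((1:ℝ)/5) * (e s) ^ ((3:ℝ)/5))
      =ᶠ[nhds r] fun _ => (1:ℝ) := by
    filter_upwards [hmem] with s hs using himp s hs
  have hF0 : HasDerivAt (fun s => e s + a₀ * s ^ ((1:ℝ)/5) * (e s) ^ ((3:ℝ)/5)) 0 r :=
    (hasDerivAt_const r (1:ℝ)).congr_of_eventuallyEq hconst
  have heq := hF.unique hF0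
  -- rewrite rpow differences
  have hr5 : r ^ ((1:ℝ)/5 - 1) = r ^ ((1:ℝ)/5) / r := by
    rw [Real.rpow_sub hr, Real.rpow_one]
  have hE5 : (e r) ^ ((3:ℝ)/5 - 1) = (e r) ^ ((3:ℝ)/5) / e r := by
    rw [Real.rpow_sub hE0, Real.rpow_one]
  set X := r ^ ((1:ℝ)/5) with hX
  set Y := (e r) ^ ((3:ℝ)/5) with hY
  rw [hr5, hE5] at heq
  have hBeq : e r + a₀ * X * Y = 1 := himp r hr
  -- solve for r * e' r
  have hkey : r * e' r = -(e r * (1 - e r) / (3 + 2 * e r)) := by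
    have h3 : (0:ℝ) < 3 + 2 * e r := by linarith
    have hB : a₀ * X * Y = 1 - e r := by linarith
    field_simp at heq
    -- heq : linear relation
    have : 5 * (r * e' r) * e r + (a₀ * X * Y) * e r + 3 * (a₀ * X * Y) * (r * e' r) = 0 := by
      nlinarith [heq, hr.ne', hE0.ne']
    rw [hB] at this
    field_simp
    nlinarith [this]
  have hdval : d = 1 * e r + r * e' r := (((hasDerivAt_id r).mul hde).unique hd).symm
  have hrewr : d - e r = -(e r * (1 - e r) / (3 + 2 * e r)) := by
    rw [hdval]; linarith [hkey]
  have h3 : (0:ℝ) < 3 + 2 * e r := by linarith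
  have hnn : 0 ≤ e r * (1 - e r) / (3 + 2 * e r) := by
    apply div_nonneg _ h3.le
    nlinarith
  have habs : |d - e r| = e r * (1 - e r) / (3 + 2 * e r) := by
    rw [hrewr, abs_neg, abs_of_nonneg hnn]
  refine ⟨habs, ?_⟩
  rw [habs, div_le_iff₀ h3]
  nlinarith
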